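/- (Closed-form P-update for the symmetric gradient energy.) Let w > 0, μ > 0, and let Q ∈ ℝ^{d×d} be symmetric. Let S be the (unique) positive definite square root of the symmetric positive definite matrix μ²Q² + 4w(w+μ)I, and set P := (1/(2(w+μ)))(μQ + S). Then P is symmetric positive definite and satisfies the matrix equation (w+μ)P² − μQP − wI = 0; moreover P is the unique symmetric positive definite solution of this equation. -/

import Mathlib

open Matrix
open scoped MatrixOrder

variable {d : ℕ}

lemma myPosDef_smul {A : Matrix (Fin d) (Fin d) ℝ} (hA : A.PosDef) {c : ℝ} (hc : 0 < c) :
    (c • A).PosDef := by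
  refine .of_dotProduct_mulVec_pos (by rw [Matrix.IsHermitian, conjTranspose_smul, star_trivial, hA.1.eq]) fun x hx => ?_
  have := hA.dotProduct_mulVec_pos hx
  simp only [smul_mulVec, dotProduct_smul, smul_eq_mul]
  positivity

lemma trace_zero_eq_zero {A : Matrix (Fin d) (Fin d) ℝ} (h : (Aᵀ * A).trace = 0) : A = 0 := by
  have h' : ∑ j, ∑ i, A i j ^ 2 = 0 := by
    simpa [Matrix.trace, Matrix.mul_apply, Matrix.diag, sq] using h
  have hz : ∀ j ∈ Finset.univ, ∀ i ∈ Finset.univ, A i j ^ 2 = 0 := by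
    intro j _
    have := (Finset.sum_eq_zero_iff_of_nonneg (fun j _ => Finset.sum_nonneg
      (fun i _ => sq_nonneg (A i j)))).mp h' j (Finset.mem_univ j)
    exact fun i _ => (Finset.sum_eq_zero_iff_of_nonneg (fun i _ => sq_nonneg (A i j))).mp this i (Finset.mem_univ i)
  ext i j
  simpa using pow_eq_zero_iff (n := 2) (by norm_num) |>.mp (hz j (Finset.mem_univ j) i (Finset.mem_univ i))

lemma commute_of_sq_commute {S Q : Matrix (Fin d) (Fin d) ℝ}
    (hS : S.PosDef) (hQ : Qᵀ = Q) (hc : Q * (S * S) = (S * S) * Q) :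
    Q * S = S * Q := by
  have hSt : Sᵀ = S := by
    rw [← conjTranspose_eq_transpose_of_trivial, hS.1.eq]
  set T := Q * S - S * Q with hT
  have hTt : Tᵀ = -T := by
    rw [hT, transpose_sub, transpose_mul, transpose_mul, hQ, hSt]; abel
  have hanti : S * T = -(T * S) := by
    have h0 : S * T + T * S = Q * (S * S) - (S * S) * Q := by rw [hT]; noncomm_ring
    rw [hc, sub_self] at h0
    exact eq_neg_of_add_eq_zero_left h0
  have hmat : Tᵀ * S * T = T * T * S := by
    rw [hTt, Matrix.mul_assoc, hanti]; noncomm_ring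
  have ht : (Tᵀ * S * T).trace = 0 := by
    have h1 : (Tᵀ * S * T).trace = (T * (T * S)).trace := by rw [hmat, Matrix.mul_assoc]
    have h2 : (T * (T * S)).trace = ((T * S) * T).trace := Matrix.trace_mul_comm _ _
    have h3 : (T * S) * T = -(Tᵀ * S * T) := by rw [hTt]; noncomm_ring
    have := h1.trans (h2.trans (by rw [h3, trace_neg]))
    linarith
  -- use the sqrt of S
  set R := CFC.sqrt S with hR
  have hRR : R * R = S := CFC.sqrt_mul_sqrt_self S hS.posSemidef.nonneg
  have hRt : Rᴴ = R := (CFC.sqrt_nonneg S).posSemidef.1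
  have hfact : Tᵀ * S * T = (R * T)ᵀ * (R * T) := by
    rw [← conjTranspose_eq_transpose_of_trivial (R * T), conjTranspose_mul, hRt,
      ← hRR, conjTranspose_eq_transpose_of_trivial]
    noncomm_ring
  have hRT : R * T = 0 := trace_zero_eq_zero (by rw [← hfact]; exact ht)
  have hST : S * T = 0 := by
    rw [← hRR, Matrix.mul_assoc, hRT, Matrix.mul_zero]
  have hTz : T = 0 := by
    have hdet : IsUnit S.det := hS.det_pos.ne'.isUnit
    calc T = (S⁻¹ * S) * T := by rw [Matrix.nonsing_inv_mul _ hdet, Matrix.one_mul]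
    _ = S⁻¹ * (S * T) := by rw [Matrix.mul_assoc]
    _ = 0 := by rw [hST, Matrix.mul_zero]
  have := sub_eq_zero.mp hTz
  exact this

lemma posDef_of_pair {B C : Matrix (Fin d) (Fin d) ℝ} {c : ℝ} (hc : 0 < c)
    (hB : Bᵀ = B) (hBC : B * C = c • 1) (hCB : C * B = c • 1)
    (hsum : (B + C).PosDef) : B.PosDef := by
  have hB' : B.IsHermitian := by
    rw [Matrix.IsHermitian, conjTranspose_eq_transpose_of_trivial, hB]
  -- eigenvalues of B are positive
  have heig : ∀ i, 0 < hB'.eigenvalues i := by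
    intro i
    set v : Fin d → ℝ := ⇑(hB'.eigenvectorBasis i) with hv
    set b : ℝ := hB'.eigenvalues i with hb
    have hvne : v ≠ 0 := by
      simpa [hv] using hB'.eigenvectorBasis.orthonormal.ne_zero i
    have hBv : B *ᵥ v = b • v := hB'.mulVec_eigenvectorBasis i
    have hCBv : C *ᵥ (B *ᵥ v) = c • v := by
      rw [Matrix.mulVec_mulVec, hCB, Matrix.smul_mulVec, Matrix.one_mulVec]
    have hbne : b ≠ 0 := by
      intro h0
      rw [hBv, h0, zero_smul, Matrix.mulVec_zero] at hCBv
      exact hvne (by simpa [hc.ne', smul_eq_zero] using hCBv.symm)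
    have hCv : C *ᵥ v = (c / b) • v := by
      have : b • (C *ᵥ v) = c • v := by
        rw [← Matrix.mulVec_smul, ← hBv, hCBv]
      have := congrArg (fun x => b⁻¹ • x) this
      simpa [smul_smul, inv_mul_cancel₀ hbne, div_eq_inv_mul] using this
    have hpos := hsum.dotProduct_mulVec_pos hvne
    rw [Matrix.add_mulVec, hBv, hCv, ← add_smul] at hpos
    have hdot : (0:ℝ) < v ⬝ᵥ v := by
      rcases lt_or_eq_of_le (by positivity : (0:ℝ) ≤ ∑ i, v i ^ 2) with h | h
      · simpa [dotProduct, sq] using h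
      · exact absurd (funext fun i => by
          have := (Finset.sum_eq_zero_iff_of_nonneg (fun i _ => sq_nonneg (v i))).mp h.symm i
            (Finset.mem_univ i)
          exact pow_eq_zero_iff (n := 2) (by norm_num) |>.mp (this) ) hvne
    have hform : (0:ℝ) < (b + c / b) * (v ⬝ᵥ v) := by
      simpa [dotProduct_smul, smul_eq_mul, star_trivial] using hpos
    have hbc : 0 < b + c / b := by
      by_contra hle
      push_neg at hle
      nlinarith
    rcases lt_trichotomy b 0 with h | h | h
    · exfalso
      have : c / b < 0 := div_neg_of_pos_of_neg hc h
      linarith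
    · exact absurd h hbne
    · exact h
  have hps : B.PosSemidef := hB'.posSemidef_iff_eigenvalues_nonneg.mpr fun i => (heig i).le
  refine .of_dotProduct_mulVec_pos hB' fun x hx => ?_
  rcases lt_or_eq_of_le (hps.dotProduct_mulVec_nonneg x) with h | h
  · simpa using h
  · exfalso
    have hBx : B *ᵥ x = 0 := (hps.dotProduct_mulVec_zero_iff x).mp (by simpa using h.symm)
    have : x = 0 := by
      have : (c⁻¹ • C) * B = 1 := by
        rw [Matrix.smul_mul, hCB, smul_smul, inv_mul_cancel₀ hc.ne', one_smul]
      calc x = ((c⁻¹ • C) * B) *ᵥ x := by rw [this, Matrix.one_mulVec]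
      _ = (c⁻¹ • C) *ᵥ (B *ᵥ x) := by rw [Matrix.mulVec_mulVec]
      _ = 0 := by rw [hBx, Matrix.mulVec_zero]
    exact hx this

/-- closed-form P-update for the symmetric gradient energy:
for `w, μ > 0` and symmetric `Q`, if `S` is the positive definite square root of
`μ²Q² + 4w(w+μ)I`, then `P = (1/(2(w+μ)))(μQ + S)` is symmetric positive definite,
satisfies `(w+μ)P² − μQP − wI = 0`, and is the unique symmetric positive definite
solution of that equation. -/
theorem p_update_symmetric_gradient (d : ℕ) (w μ : ℝ) (hw : 0 < w) (hμ : 0 < μ)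
    (Q : Matrix (Fin d) (Fin d) ℝ) (hQ : Qᵀ = Q)
    (S : Matrix (Fin d) (Fin d) ℝ) (hS : S.PosDef)
    (hSsq : S * S = μ ^ 2 • (Q * Q) + (4 * w * (w + μ)) • (1 : Matrix (Fin d) (Fin d) ℝ)) :
    ((1 / (2 * (w + μ))) • (μ • Q + S)).PosDef ∧
    (w + μ) • ((1 / (2 * (w + μ))) • (μ • Q + S)) ^ 2
      - μ • (Q * ((1 / (2 * (w + μ))) • (μ • Q + S)))
      - w • (1 : Matrix (Fin d) (Fin d) ℝ) = 0 ∧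
    ∀ P' : Matrix (Fin d) (Fin d) ℝ, P'.PosDef →
      (w + μ) • P' ^ 2 - μ • (Q * P') - w • (1 : Matrix (Fin d) (Fin d) ℝ) = 0 →
      P' = (1 / (2 * (w + μ))) • (μ • Q + S) := by
  have ha : 0 < w + μ := by linarith
  have hane : w + μ ≠ 0 := ha.ne'
  have hSt : Sᵀ = S := by rw [← conjTranspose_eq_transpose_of_trivial, hS.1.eq]
  have hcommSS : Q * (S * S) = (S * S) * Q := by
    rw [hSsq]
    simp [mul_add, add_mul, mul_smul_comm, smul_mul_assoc, Matrix.mul_assoc]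
  have hcomm : Q * S = S * Q := commute_of_sq_commute hS hQ hcommSS
  -- positive definiteness of μ•Q + S
  have hBC : (μ • Q + S) * (S - μ • Q) = (4 * w * (w + μ)) • (1 : Matrix (Fin d) (Fin d) ℝ) := by
    simp only [add_mul, mul_sub, sub_mul, smul_mul_assoc, mul_smul_comm, smul_smul]
    rw [hSsq, ← hcomm]
    module
  have hCB : (S - μ • Q) * (μ • Q + S) = (4 * w * (w + μ)) • (1 : Matrix (Fin d) (Fin d) ℝ) := by
    simp only [add_mul, mul_sub, sub_mul, mul_add, smul_mul_assoc, mul_smul_comm, smul_smul]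
    rw [hSsq, ← hcomm]
    module
  have hsum : ((μ • Q + S) + (S - μ • Q)).PosDef := by
    rw [show (μ • Q + S) + (S - μ • Q) = (2:ℝ) • S by module]
    exact myPosDef_smul hS two_pos
  have hBt : (μ • Q + S)ᵀ = μ • Q + S := by
    rw [transpose_add, transpose_smul, hQ, hSt]
  have hBpos : (μ • Q + S).PosDef :=
    posDef_of_pair (by positivity) hBt hBC hCB hsum
  refine ⟨myPosDef_smul hBpos (by positivity), ?_, ?_⟩
  · -- the equation
    rw [sq]
    simp only [smul_mul_assoc, mul_smul_comm, add_mul, mul_add, smul_add, smul_smul]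
    rw [hSsq, ← hcomm]
    match_scalars <;> field_simp <;> ring
  · -- uniqueness
    intro P' hP' hE
    have hPdet : IsUnit P'.det := hP'.det_pos.ne'.isUnit
    have hPinv : P' * P'⁻¹ = 1 := mul_nonsing_inv _ hPdet
    have hInvP : P'⁻¹ * P' = 1 := nonsing_inv_mul _ hPdet
    rw [sq, sub_sub, sub_eq_zero] at hE
    have h1 : μ • Q = (w + μ) • P' - w • P'⁻¹ := by
      have h2 := congrArg (fun X => X * P'⁻¹) hE
      simp only [smul_mul_assoc, add_mul, Matrix.mul_assoc, hPinv, Matrix.mul_one, Matrix.one_mul] at h2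
      rw [eq_sub_iff_add_eq, ← h2]
    have hQQ : μ ^ 2 • (Q * Q) = ((w+μ)*(w+μ)) • (P' * P')
        - (2*(w+μ)*w) • (1 : Matrix (Fin d) (Fin d) ℝ) + (w*w) • (P'⁻¹ * P'⁻¹) := by
      have h3 : μ ^ 2 • (Q * Q) = (μ • Q) * (μ • Q) := by
        rw [smul_mul_assoc, mul_smul_comm, smul_smul]; module
      rw [h3, h1]
      simp only [sub_mul, mul_sub, smul_mul_assoc, mul_smul_comm, smul_smul]
      rw [hPinv, hInvP]
      module
    have hS'pos : ((w + μ) • P' + w • P'⁻¹).PosDef :=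
      (myPosDef_smul hP' ha).add (myPosDef_smul hP'.inv hw)
    have hS'sq : ((w + μ) • P' + w • P'⁻¹) * ((w + μ) • P' + w • P'⁻¹) = S * S := by
      rw [hSsq, hQQ]
      simp only [add_mul, mul_add, smul_mul_assoc, mul_smul_comm, smul_smul]
      rw [hPinv, hInvP]
      module
    have hS'eq : (w + μ) • P' + w • P'⁻¹ = S :=
      by rw [← CFC.sqrt_mul_self _ hS'pos.posSemidef.nonneg, hS'sq, CFC.sqrt_mul_self _ hS.posSemidef.nonneg]
    have hfin : μ • Q + S = (2 * (w + μ)) • P' := by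
      rw [← hS'eq, h1]
      module
    rw [hfin, smul_smul, one_div, inv_mul_cancel₀ (by positivity), one_smul]
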